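/- Let p ∈ [0,1), let μ := NB(1,p) and ν := NB(2,p), and set m := ⌊p/(1−p)⌋. Then ‖μ − ν‖_TV = Σ_{k=0}^{m} (μ(k) − ν(k)) = (m+1)·(1−p)·p^{m+1}. Moreover, if p = m/(m+1) for some m ∈ ℕ₀, this value equals p^{1/(1−p)}. -/

import Mathlib

/-- The total variation distance between `NB(1,p)` (with mass function `k ↦ p^k (1−p)`) and
`NB(2,p)` (with mass function `k ↦ (k+1) p^k (1−p)²`) equals
`Σ_{k=0}^{m} (μ(k) − ν(k)) = (m+1)(1−p)p^{m+1}` where `m = ⌊p/(1−p)⌋`; and if `p = m/(m+1)`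
for some `m ∈ ℕ`, this value equals `p^{1/(1−p)}`. -/
theorem tv_negBinomial_one_two (p : ℝ) (hp : p ∈ Set.Ico (0 : ℝ) 1) :
    (⨆ A : Set ℕ,
        |(∑' k : A, p ^ (k : ℕ) * (1 - p)) -
          ∑' k : A, (((k : ℕ) : ℝ) + 1) * p ^ (k : ℕ) * (1 - p) ^ 2|)
      = ∑ k ∈ Finset.range (⌊p / (1 - p)⌋₊ + 1),
          (p ^ k * (1 - p) - ((k : ℝ) + 1) * p ^ k * (1 - p) ^ 2) ∧
    (⨆ A : Set ℕ,
        |(∑' k : A, p ^ (k : ℕ) * (1 - p)) -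
          ∑' k : A, (((k : ℕ) : ℝ) + 1) * p ^ (k : ℕ) * (1 - p) ^ 2|)
      = ((⌊p / (1 - p)⌋₊ : ℝ) + 1) * (1 - p) * p ^ (⌊p / (1 - p)⌋₊ + 1) ∧
    ∀ m : ℕ, p = (m : ℝ) / ((m : ℝ) + 1) →
      ((⌊p / (1 - p)⌋₊ : ℝ) + 1) * (1 - p) * p ^ (⌊p / (1 - p)⌋₊ + 1)
        = p ^ ((1 : ℝ) / (1 - p)) := by
  obtain ⟨hp0, hp1⟩ := hp
  have hq0 : (0:ℝ) < 1 - p := by linarith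
  have hq0' : (1:ℝ) - p ≠ 0 := ne_of_gt hq0
  set f : ℕ → ℝ := fun k => p ^ k * (1 - p) - ((k : ℝ) + 1) * p ^ k * (1 - p) ^ 2 with hfdef
  set m : ℕ := ⌊p / (1 - p)⌋₊ with hm
  -- partial sum formula
  have hpartial : ∀ n : ℕ, ∑ k ∈ Finset.range n, f k = (n : ℝ) * (1 - p) * p ^ n := by
    intro n
    induction n with
    | zero => simp
    | succ n ih =>
      rw [Finset.sum_range_succ, ih]
      push_cast
      ring
  have habs : |p| < 1 := by rw [abs_of_nonneg hp0]; exact hp1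
  -- summability facts
  have hsum1 : Summable (fun k : ℕ => p ^ k * (1 - p)) :=
    (summable_geometric_of_lt_one hp0 hp1).mul_right _
  have hsumk : Summable (fun k : ℕ => (k : ℝ) * p ^ k) := by
    have := summable_pow_mul_geometric_of_norm_lt_one 1 (by rwa [Real.norm_eq_abs] : ‖p‖ < 1)
    simpa using this
  have hsum2 : Summable (fun k : ℕ => ((k : ℝ) + 1) * p ^ k * (1 - p) ^ 2) := by
    have : Summable (fun k : ℕ => ((k : ℝ) * p ^ k + p ^ k) * (1 - p) ^ 2) :=
      (hsumk.add (summable_geometric_of_lt_one hp0 hp1)).mul_right _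
    exact this.congr fun k => by ring
  have hf : Summable f := hsum1.sub hsum2
  -- total sum is zero
  have htot : ∑' k, f k = 0 := by
    have h1 : ∑' k : ℕ, p ^ k * (1 - p) = 1 := by
      rw [tsum_mul_right, tsum_geometric_of_lt_one hp0 hp1, inv_mul_cancel₀ hq0']
    have h2 : ∑' k : ℕ, ((k : ℝ) + 1) * p ^ k * (1 - p) ^ 2 = 1 := by
      have hs : ∑' k : ℕ, ((k : ℝ) * p ^ k + p ^ k) = p / (1 - p) ^ 2 + (1 - p)⁻¹ := by
        rw [Summable.tsum_add hsumk (summable_geometric_of_lt_one hp0 hp1),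
          tsum_coe_mul_geometric_of_norm_lt_one (by rwa [Real.norm_eq_abs]),
          tsum_geometric_of_lt_one hp0 hp1]
      calc ∑' k : ℕ, ((k : ℝ) + 1) * p ^ k * (1 - p) ^ 2
          = ∑' k : ℕ, ((k : ℝ) * p ^ k + p ^ k) * (1 - p) ^ 2 := by
            congr 1; funext k; ring
        _ = (∑' k : ℕ, ((k : ℝ) * p ^ k + p ^ k)) * (1 - p) ^ 2 := tsum_mul_right
        _ = 1 := by rw [hs]; field_simp; ring
    rw [hfdef, Summable.tsum_sub hsum1 hsum2, h1, h2, sub_self]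
  -- sign of f
  have hratio : (0:ℝ) ≤ p / (1 - p) := div_nonneg hp0 hq0.le
  have hfpos : ∀ k ∈ Finset.range (m + 1), 0 ≤ f k := by
    intro k hk
    rw [Finset.mem_range, Nat.lt_succ_iff] at hk
    have hk' : (k : ℝ) ≤ p / (1 - p) :=
      le_trans (by exact_mod_cast hk) (Nat.floor_le hratio)
    have : (k : ℝ) * (1 - p) ≤ p := by
      rwa [← le_div_iff₀ hq0]
    have hfk : f k = p ^ k * (1 - p) * (p - (k : ℝ) * (1 - p)) := by
      rw [hfdef]; ring
    rw [hfk]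
    exact mul_nonneg (mul_nonneg (pow_nonneg hp0 k) hq0.le) (by linarith)
  have hfneg : ∀ k : ℕ, k ∉ Finset.range (m + 1) → f k ≤ 0 := by
    intro k hk
    rw [Finset.mem_range, Nat.lt_succ_iff, not_le] at hk
    have hk' : p / (1 - p) < (k : ℝ) := by
      have := (Nat.floor_lt hratio).mp hk
      exact_mod_cast this
    have : p < (k : ℝ) * (1 - p) := by
      rwa [div_lt_iff₀ hq0] at hk'
    have hfk : f k = p ^ k * (1 - p) * (p - (k : ℝ) * (1 - p)) := by
      rw [hfdef]; ring
    rw [hfk]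
    exact mul_nonpos_of_nonneg_of_nonpos
      (mul_nonneg (pow_nonneg hp0 k) hq0.le) (by linarith)
  -- g = positive part of f
  set g : ℕ → ℝ := fun k => max (f k) 0 with hgdef
  have hg0 : ∀ k : ℕ, k ∉ Finset.range (m + 1) → g k = 0 := fun k hk =>
    max_eq_right (hfneg k hk)
  have hgsummable : Summable g := summable_of_ne_finset_zero hg0
  have hgnonneg : ∀ k, 0 ≤ g k := fun k => le_max_right _ _
  set S : ℝ := ∑ k ∈ Finset.range (m + 1), f k with hS
  have hgtsum : ∑' k, g k = S := by
    rw [tsum_eq_sum hg0]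
    exact Finset.sum_congr rfl fun k hk => max_eq_left (hfpos k hk)
  have hSnonneg : 0 ≤ S := Finset.sum_nonneg hfpos
  -- bound for arbitrary A
  have hbound : ∀ A : Set ℕ,
      |(∑' k : A, p ^ (k : ℕ) * (1 - p)) -
        ∑' k : A, (((k : ℕ) : ℝ) + 1) * p ^ (k : ℕ) * (1 - p) ^ 2| ≤ S := by
    intro A
    have hsub : (∑' k : A, p ^ (k : ℕ) * (1 - p)) -
        (∑' k : A, (((k : ℕ) : ℝ) + 1) * p ^ (k : ℕ) * (1 - p) ^ 2)
        = ∑' k : A, f (k : ℕ) :=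
      (Summable.tsum_sub (hsum1.subtype A) (hsum2.subtype A)).symm
    rw [hsub, abs_le]
    have key : ∀ f' h : ℕ → ℝ, Summable f' → Summable h → (∀ k, 0 ≤ h k) →
        (∀ k, f' k ≤ h k) → (∑' k : A, f' (k : ℕ)) ≤ ∑' k, h k := by
      intro f' h hf' hh hhn hfh
      calc (∑' k : A, f' (k : ℕ)) ≤ ∑' k : A, h (k : ℕ) :=
            Summable.tsum_le_tsum (fun k => hfh k) (hf'.subtype A) (hh.subtype A)
        _ = ∑' k, A.indicator h k := tsum_subtype A h
        _ ≤ ∑' k, h k :=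
            Summable.tsum_le_tsum (fun k => Set.indicator_le_self' (fun k _ => hhn k) k)
              (hh.indicator A) hh
    constructor
    · have h2 : ∑' k, (g k - f k) = S := by
        rw [Summable.tsum_sub hgsummable hf, hgtsum, htot, sub_zero]
      have h1 := key (fun k => -f k) (fun k => g k - f k) hf.neg (hgsummable.sub hf)
        (fun k => by have := le_max_left (f k) 0; show 0 ≤ max (f k) 0 - f k; linarith)
        (fun k => by have := hgnonneg k; show -f k ≤ g k - f k; linarith)
      rw [h2, tsum_neg] at h1
      linarith
    · have h1 := key f g hf hgsummable hgnonneg (fun k => le_max_left _ _)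
      rwa [hgtsum] at h1
  -- the sup equals S
  have hA0 : (∑' k : (↑(Finset.range (m + 1)) : Set ℕ), p ^ (k : ℕ) * (1 - p)) -
      (∑' k : (↑(Finset.range (m + 1)) : Set ℕ),
        (((k : ℕ) : ℝ) + 1) * p ^ (k : ℕ) * (1 - p) ^ 2) = S := by
    have h1 : (∑' k : (↑(Finset.range (m + 1)) : Set ℕ), p ^ (k : ℕ) * (1 - p)) -
        (∑' k : (↑(Finset.range (m + 1)) : Set ℕ),
          (((k : ℕ) : ℝ) + 1) * p ^ (k : ℕ) * (1 - p) ^ 2)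
        = ∑' k : (↑(Finset.range (m + 1)) : Set ℕ), f (k : ℕ) :=
      (Summable.tsum_sub (hsum1.subtype _) (hsum2.subtype _)).symm
    rw [h1]
    have h2 : (∑' k : (↑(Finset.range (m + 1)) : Set ℕ), f (k : ℕ))
        = ∑' k : {x // x ∈ Finset.range (m + 1)}, f (k : ℕ) := rfl
    rw [h2, Finset.tsum_subtype]
  have hsup : (⨆ A : Set ℕ,
      |(∑' k : A, p ^ (k : ℕ) * (1 - p)) -
        ∑' k : A, (((k : ℕ) : ℝ) + 1) * p ^ (k : ℕ) * (1 - p) ^ 2|) = S := by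
    apply le_antisymm
    · exact ciSup_le hbound
    · have hb : BddAbove (Set.range fun A : Set ℕ =>
          |(∑' k : A, p ^ (k : ℕ) * (1 - p)) -
            ∑' k : A, (((k : ℕ) : ℝ) + 1) * p ^ (k : ℕ) * (1 - p) ^ 2|) :=
        ⟨S, by rintro x ⟨A, rfl⟩; exact hbound A⟩
      have := le_ciSup hb (↑(Finset.range (m + 1)) : Set ℕ)
      rwa [hA0, abs_of_nonneg hSnonneg] at this
  refine ⟨hsup, ?_, ?_⟩
  · rw [hsup, hS, hpartial]
    push_cast
    ring
  · intro n hn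
    have hn1 : ((n : ℝ) + 1) ≠ 0 := by positivity
    have hq : 1 - p = 1 / ((n : ℝ) + 1) := by rw [hn]; field_simp; ring
    have hfloor : ⌊p / (1 - p)⌋₊ = n := by
      have : p / (1 - p) = (n : ℝ) := by
        rw [hq, hn]; field_simp
      rw [this, Nat.floor_natCast]
    have hexp : (1 : ℝ) / (1 - p) = ((n + 1 : ℕ) : ℝ) := by
      rw [hq, one_div_one_div]; push_cast; ring
    rw [hm, hfloor, hexp, Real.rpow_natCast, hq]
    rw [mul_one_div, div_self hn1, one_mul]
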